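/- Let 𝒢 = (V,E) be a finite undirected graph with V nonempty, 𝒮_G the associated FTS, 𝒮' an FTS, and R a coherent branching feature bisimulation relation witnessing 𝒮_G ≃_cbf 𝒮'. If (u,v) ∈ E, then there is no state r of 𝒮' and feature expressions φ, φ' with both R(s_u, φ, r) and R(s_v, φ', r). Consequently, choosing for each v ∈ V a state r_v of 𝒮' with R(s_v, φ_v, r_v) for some φ_v yields a proper coloring of 𝒢 by states of 𝒮'. -/

import Mathlib

open Classical

/-- Actions with a silent action τ, modeled as `none`. -/
abbrev Act (A : Type) := Option A

/-- Feature expressions, taken modulo product-equivalence: a feature expression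
is identified with the set of products satisfying it (`Set.univ` is `true`,
`∅` is `false`, `∩` is `∧`, `∪` is `∨`, and `P ⊨ φ` is `P ∈ φ`). -/
abbrev FExp (P : Type) := Set P

/-- Transition constraint function of a feature transition system (FTS). -/
abbrev TCF (S A P : Type) := S → Act A → S → FExp P

/-- `s →α|ψ s'`: the transition constraint is `ψ` and `ψ` is satisfiable. -/
def FTrans {S A P : Type} (θ : TCF S A P) (s : S) (α : Act A) (ψ : FExp P) (s' : S) : Prop :=
  θ s α s' = ψ ∧ ψ.Nonempty

/-- `t̂ →(α|ψ) t'`: either `t̂ →α|ψ t'`, or `α = τ`, `t̂ = t'` and `ψ = true`. -/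
def FTransOpt {S A P : Type} (θ : TCF S A P) (s : S) (α : Act A) (ψ : FExp P) (s' : S) : Prop :=
  FTrans θ s α ψ s' ∨ (α = none ∧ s = s' ∧ ψ = Set.univ)

/-- `s ⇒η s'`: a finite (possibly empty) sequence of τ-transitions whose
constraints have conjunction `η`. -/
inductive TauSeq {S A P : Type} (θ : TCF S A P) : S → FExp P → S → Prop
  | refl (s : S) : TauSeq θ s Set.univ s
  | step {s s' s'' : S} {ψ η : FExp P} :
      FTrans θ s none ψ s' → TauSeq θ s' η s'' → TauSeq θ s (ψ ∩ η) s''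

/-- Branching feature bisimulation relation for the transition constraint
function `θ`. -/
def IsBFB {S A P : Type} (θ : TCF S A P) (R : S → FExp P → S → Prop) : Prop :=
  (∀ s φ t, R s φ t → R t φ s) ∧
  ∀ s φ t α ψ s', R s φ t → FTrans θ s α ψ s' →
    ∃ n : ℕ, 0 < n ∧ ∃ th tf : Fin n → S, ∃ η ps ph ph' : Fin n → FExp P,
      (∀ i, TauSeq θ t (η i) (th i) ∧ FTransOpt θ (th i) α (ps i) (tf i) ∧
            R s (ph i) (th i) ∧ R s' (ph' i) (tf i)) ∧
      ∀ p, p ∈ φ → p ∈ ψ → ∃ i, p ∈ η i ∧ p ∈ ps i ∧ p ∈ ph i ∧ p ∈ ph' i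

/-- `p ∈ ρ(s)`: there is a path from `s₀` to `s` all of whose transition
constraints are satisfied by the product `p`. -/
inductive ReachP {S A P : Type} (θ : TCF S A P) (p : P) (s₀ : S) : S → Prop
  | refl : ReachP θ p s₀ s₀
  | step {s s' : S} {α : Act A} {ψ : FExp P} :
      ReachP θ p s₀ s → FTrans θ s α ψ s' → p ∈ ψ → ReachP θ p s₀ s'

/-- The reachability function ρ of an FTS with initial state `s₀`. -/
def Reach {S A P : Type} (θ : TCF S A P) (s₀ s : S) : FExp P := {p | ReachP θ p s₀ s}

/-- Transition constraint function of the disjoint union of two FTS. -/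
def sumθ {S S' A P : Type} (θ : TCF S A P) (θ' : TCF S' A P) : TCF (S ⊕ S') A P :=
  fun x α y =>
    match x, y with
    | Sum.inl s, Sum.inl t => θ s α t
    | Sum.inr s, Sum.inr t => θ' s α t
    | _, _ => ∅

/-- Coherence of a relation on the disjoint union of two FTS:
`R(s,φ,s')` implies that every product satisfying `ρ(s)` satisfies `φ`. -/
def Coherent {S S' A P : Type} (θ : TCF S A P) (s₀ : S) (θ' : TCF S' A P) (s₀' : S')
    (R : (S ⊕ S') → FExp P → (S ⊕ S') → Prop) : Prop :=
  (∀ s φ y, R (Sum.inl s) φ y → Reach θ s₀ s ⊆ φ) ∧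
  (∀ s' φ y, R (Sum.inr s') φ y → Reach θ' s₀' s' ⊆ φ)

/-- `𝒮 ≃_cbf 𝒮'`: coherent branching feature bisimilarity of two FTS. -/
def CBF {S S' A P : Type} (θ : TCF S A P) (s₀ : S) (θ' : TCF S' A P) (s₀' : S') : Prop :=
  ∃ R : (S ⊕ S') → FExp P → (S ⊕ S') → Prop,
    IsBFB (sumθ θ θ') R ∧ Coherent θ s₀ θ' s₀' R ∧
    R (Sum.inl s₀) Set.univ (Sum.inr s₀')

/-- Projection of an FTS to a product `p`: the transition relation of the LTS `𝒮_p`. -/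
def projTr {S A P : Type} (θ : TCF S A P) (p : P) : S → Option A → S → Prop :=
  fun s α s' => ∃ ψ, FTrans θ s α ψ s' ∧ p ∈ ψ

/-- For an LTS: `s ⇒ s'`, a finite (possibly empty) sequence of τ-transitions. -/
def TauStar {S A : Type} (Tr : S → Option A → S → Prop) : S → S → Prop :=
  Relation.ReflTransGen (fun s t => Tr s none t)

/-- For an LTS: `t̂ →(α) t'`. -/
def TransOpt {S A : Type} (Tr : S → Option A → S → Prop) (s : S) (α : Option A) (t : S) : Prop :=
  Tr s α t ∨ (α = none ∧ s = t)

/-- Branching bisimulation relation for an LTS. -/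
def IsBB {S A : Type} (Tr : S → Option A → S → Prop) (R : S → S → Prop) : Prop :=
  (∀ s t, R s t → R t s) ∧
  ∀ s t α s', R s t → Tr s α s' →
    ∃ th t', TauStar Tr t th ∧ TransOpt Tr th α t' ∧ R s th ∧ R s' t'

/-- States of the FTS `𝒮_G` associated with a graph with vertex type `V`. -/
inductive GS (V : Type) where
  | s1 : GS V
  | s2 : GS V
  | sv : V → GS V

/-- Transition constraint function of `𝒮_G`. The single action `a` is `some ()`;
the products are the vertices (`v` stands for `P_v = {f_v}`), so the feature
expression `f_v` is the set `{v}` and `θ_G(s₁,a,s_v) = f_v ∨ ⋁{f_u | (u,v) ∈ E}`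
is `insert v {u | G.Adj u v}`. -/
def graphθ {V : Type} (G : SimpleGraph V) : TCF (GS V) Unit V :=
  fun x α y =>
    match x, α, y with
    | GS.s1, some _, GS.sv v => insert v {u | G.Adj u v}
    | GS.sv v, some _, GS.s2 => {v}
    | _, _, _ => ∅

section MyAux

variable {S A P : Type}

lemma tauSeq_proj {θ : TCF S A P} {p : P} {t t' : S} {η : FExp P}
    (h : TauSeq θ t η t') (hp : p ∈ η) : TauStar (projTr θ p) t t' := by
  induction h with
  | refl s => exact Relation.ReflTransGen.refl
  | step hft _ ih =>
    exact Relation.ReflTransGen.head ⟨_, hft, hp.1⟩ (ih hp.2)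

lemma projBB {θ : TCF S A P} {R : S → FExp P → S → Prop} (h : IsBFB θ R) (p : P) :
    IsBB (projTr θ p) (fun s t => ∃ φ, R s φ t ∧ p ∈ φ) := by
  constructor
  · rintro s t ⟨φ, hR, hp⟩; exact ⟨φ, h.1 _ _ _ hR, hp⟩
  · rintro s t α s' ⟨φ, hR, hp⟩ ⟨ψ, hft, hpψ⟩
    obtain ⟨n, hn, th, tf, η, ps, ph, ph', hfam, hcov⟩ := h.2 s φ t α ψ s' hR hft
    obtain ⟨i, hη, hps, hph, hph'⟩ := hcov p hp hpψ
    obtain ⟨hts, hfo, hR1, hR2⟩ := hfam i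
    refine ⟨th i, tf i, tauSeq_proj hts hη, ?_, ⟨_, hR1, hph⟩, ⟨_, hR2, hph'⟩⟩
    cases hfo with
    | inl hft' => exact Or.inl ⟨_, hft', hps⟩
    | inr hr => exact Or.inr ⟨hr.1, hr.2.1⟩

end MyAux

/-- If `R` is a coherent branching feature bisimulation relation
witnessing `𝒮_G ≃_cbf 𝒮'`, then adjacent vertices `u`, `v` cannot have `s_u`
and `s_v` related to a common state `r` of `𝒮'`; consequently any choice
`v ↦ r_v` of related states yields a proper coloring of `𝒢` by states of `𝒮'`. -/
theorem stmt8 {V : Type} [Fintype V] [Nonempty V] (G : SimpleGraph V)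
    {S' : Type} (θ' : TCF S' Unit V) (i' : S')
    (R : (GS V ⊕ S') → FExp V → (GS V ⊕ S') → Prop)
    (hBFB : IsBFB (sumθ (graphθ G) θ') R)
    (hCoh : Coherent (graphθ G) GS.s1 θ' i' R)
    (hInit : R (Sum.inl GS.s1) Set.univ (Sum.inr i')) :
    (∀ u v : V, G.Adj u v →
      ¬ ∃ (r : S') (φ φ' : FExp V),
          R (Sum.inl (GS.sv u)) φ (Sum.inr r) ∧
          R (Sum.inl (GS.sv v)) φ' (Sum.inr r)) ∧
    (∀ rv : V → S',
      (∀ v : V, ∃ φ : FExp V, R (Sum.inl (GS.sv v)) φ (Sum.inr (rv v))) →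
      ∀ u v : V, G.Adj u v → rv u ≠ rv v) := by
  have key : ∀ u v : V, G.Adj u v →
      ¬ ∃ (r : S') (φ φ' : FExp V),
          R (Sum.inl (GS.sv u)) φ (Sum.inr r) ∧
          R (Sum.inl (GS.sv v)) φ' (Sum.inr r) := by
    rintro u v hadj ⟨r, φ, φ', hRu, hRv⟩
    have hne : u ≠ v := G.ne_of_adj hadj
    -- u satisfies the reachability conditions of s_u and s_v
    have hreachu : u ∈ Reach (graphθ G) GS.s1 (GS.sv u) :=
      ReachP.step (α := some ()) (ψ := insert u {x | G.Adj x u}) ReachP.refl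
        ⟨rfl, ⟨u, Set.mem_insert _ _⟩⟩ (Set.mem_insert _ _)
    have hreachv : u ∈ Reach (graphθ G) GS.s1 (GS.sv v) :=
      ReachP.step (α := some ()) (ψ := insert v {x | G.Adj x v}) ReachP.refl
        ⟨rfl, ⟨v, Set.mem_insert _ _⟩⟩ (Set.mem_insert_iff.mpr (Or.inr hadj))
    have huφ : u ∈ φ := hCoh.1 _ _ _ hRu hreachu
    have huφ' : u ∈ φ' := hCoh.1 _ _ _ hRv hreachv
    -- the projected LTS at product u, and the projected bisimulation
    have hBB := projBB hBFB u
    -- s_v is a deadlock in the projection at u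
    have hdead : ∀ α y, ¬ projTr (sumθ (graphθ G) θ') u (Sum.inl (GS.sv v)) α y := by
      rintro α y ⟨ψ, ⟨hθ, -⟩, hu⟩
      subst hθ
      rcases y with y' | y'
      · rcases α with _ | a <;> cases y' <;> simp_all [sumθ, graphθ]
      · simp [sumθ] at hu
    have hstuck : ∀ x, TauStar (projTr (sumθ (graphθ G) θ') u) (Sum.inl (GS.sv v)) x →
        x = Sum.inl (GS.sv v) := by
      intro x hx
      rcases Relation.ReflTransGen.cases_head hx with rfl | ⟨y, hy, -⟩
      · rfl
      · exact absurd hy (hdead none y)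
    -- states reachable from r by τ-steps remain related to s_v
    have hB : ∀ x, TauStar (projTr (sumθ (graphθ G) θ') u) (Sum.inr r) x →
        ∃ ξ, R x ξ (Sum.inl (GS.sv v)) ∧ u ∈ ξ := by
      intro x hx
      induction hx with
      | refl => exact ⟨φ', hBFB.1 _ _ _ hRv, huφ'⟩
      | tail hseg hstep ih =>
        obtain ⟨th', t', hts, hto, _, hRt'⟩ := hBB.2 _ _ _ _ ih hstep
        have hth' : th' = Sum.inl (GS.sv v) := hstuck _ hts
        subst hth'
        rcases hto with ht | ⟨-, rfl⟩
        · exact absurd ht (hdead _ _)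
        · exact hRt'
    -- s_u has an a-transition in the projection at u
    have htrans : projTr (sumθ (graphθ G) θ') u (Sum.inl (GS.sv u)) (some ())
        (Sum.inl GS.s2) := ⟨{u}, ⟨rfl, ⟨u, rfl⟩⟩, rfl⟩
    obtain ⟨th, tf, hts, hto, hRth, -⟩ := hBB.2 _ _ _ _ ⟨φ, hRu, huφ⟩ htrans
    rcases hto with ht | ⟨hα, -⟩
    · obtain ⟨th'', t'', hts'', hto'', -, -⟩ := hBB.2 _ _ _ _ (hB th hts) ht
      have hth'' : th'' = Sum.inl (GS.sv v) := hstuck _ hts''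
      subst hth''
      rcases hto'' with ht' | ⟨hα', -⟩
      · exact absurd ht' (hdead _ _)
      · exact Option.some_ne_none _ hα'
    · exact Option.some_ne_none _ hα
  refine ⟨key, ?_⟩
  intro rv hrv u v hadj heq
  obtain ⟨φu, hφu⟩ := hrv u
  obtain ⟨φv, hφv⟩ := hrv v
  exact key u v hadj ⟨rv u, φu, φv, hφu, heq ▸ hφv⟩
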